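/- Let β, c, μ, ξ, K be positive reals and C_V ≥ 0, s > 0, with β·c·μ > 1 and β·c·μ ≤ ξ + 1. Let (a_k)_{k≥1} be a sequence of nonnegative reals satisfying a_{k+1} ≤ (1 − β·c·μ/(ξ + k))·a_k + β²·K·C_V·s/(2·(ξ + k)²) for all k ≥ 1. Set κ := max{ β²·K·C_V/(2·(β·c·μ − 1)), (ξ + 1)·a₁/s }. Then a_k ≤ κ·s/(ξ + k) for all k ≥ 1. -/

import Mathlib

/-- Diminishing-stepsize recursion: if nonnegative reals `a_k` satisfy
`a_{k+1} ≤ (1 - βcμ/(ξ+k)) a_k + β²KC_V s/(2(ξ+k)²)` for `k ≥ 1`, with `βcμ > 1` and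
`βcμ ≤ ξ + 1`, then `a_k ≤ κ s/(ξ+k)` where
`κ = max (β²KC_V/(2(βcμ-1))) ((ξ+1)a₁/s)`. -/
theorem diminishing_step_recursion
    (β c mu ξ K C_V s : ℝ)
    (hβ : 0 < β) (hc : 0 < c) (hmu : 0 < mu) (hξ : 0 < ξ) (hK : 0 < K)
    (hCV : 0 ≤ C_V) (hs : 0 < s)
    (hβcμ : 1 < β * c * mu) (hβcμ' : β * c * mu ≤ ξ + 1)
    (a : ℕ → ℝ) (ha0 : ∀ k ≥ 1, 0 ≤ a k)
    (hrec : ∀ k ≥ 1, a (k + 1) ≤ (1 - β * c * mu / (ξ + (k : ℝ))) * a k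
        + β ^ 2 * K * C_V * s / (2 * (ξ + (k : ℝ)) ^ 2)) :
    ∀ k ≥ 1, a k ≤
      max (β ^ 2 * K * C_V / (2 * (β * c * mu - 1))) ((ξ + 1) * a 1 / s) * s / (ξ + (k : ℝ)) := by
  set b := β * c * mu with hb
  set B := β ^ 2 * K * C_V with hB
  set κ := max (B / (2 * (b - 1))) ((ξ + 1) * a 1 / s) with hκ
  have hB0 : 0 ≤ B := by positivity
  have hκ0 : 0 ≤ κ := le_trans (div_nonneg hB0 (by linarith)) (le_max_left _ _)
  have key : B ≤ 2 * (b - 1) * κ := by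
    have h := le_max_left (B / (2 * (b - 1))) ((ξ + 1) * a 1 / s)
    rw [div_le_iff₀ (by linarith)] at h
    linarith [h]
  intro k hk
  induction k with
  | zero => omega
  | succ n ih =>
    rcases Nat.lt_or_ge n 1 with h1 | h1
    · have hn0 : n = 0 := by omega
      subst hn0
      push_cast
      have h2 := le_max_right (B / (2 * (b - 1))) ((ξ + 1) * a 1 / s)
      rw [div_le_iff₀ hs] at h2
      rw [le_div_iff₀ (by linarith : (0:ℝ) < ξ + 1)]
      nlinarith [h2]
    · have ihn := ih h1
      set t : ℝ := ξ + (n : ℝ) with hT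
      have ht1 : (1 : ℝ) ≤ (n : ℝ) := by exact_mod_cast h1
      have ht : (0 : ℝ) < t := by rw [hT]; linarith
      have htb : b ≤ t := by rw [hT]; linarith
      have hfac : 0 ≤ 1 - b / t := by
        rw [sub_nonneg, div_le_one ht]; exact htb
      have haleq : (1 - b / t) * a n ≤ (1 - b / t) * (κ * s / t) :=
        mul_le_mul_of_nonneg_left ihn hfac
      have step := hrec n h1
      have combined : a (n + 1) ≤ (1 - b / t) * (κ * s / t) + B * s / (2 * t ^ 2) := by
        calc a (n + 1) ≤ (1 - b / t) * a n + B * s / (2 * t ^ 2) := step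
          _ ≤ _ := by linarith [haleq]
      have heq : (1 - b / t) * (κ * s / t) + B * s / (2 * t ^ 2)
          = ((t - b) * (2 * κ * s) + B * s) / (2 * t ^ 2) := by
        field_simp
      have hgoal2 : ((t - b) * (2 * κ * s) + B * s) / (2 * t ^ 2) ≤ κ * s / (t + 1) := by
        rw [div_le_div_iff₀ (by positivity) (by linarith)]
        have hkey2 : B * (s * (t + 1)) ≤ 2 * (b - 1) * κ * (s * (t + 1)) :=
          mul_le_mul_of_nonneg_right key (by positivity)
        nlinarith [mul_nonneg (mul_nonneg hκ0 hs.le) ht.le, mul_nonneg hκ0 hs.le]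
      have : a (n + 1) ≤ κ * s / (t + 1) := by
        calc a (n + 1) ≤ _ := combined
          _ = _ := heq
          _ ≤ _ := hgoal2
      push_cast
      rw [hT] at this
      calc a (n + 1) ≤ κ * s / (ξ + (n : ℝ) + 1) := this
        _ = κ * s / (ξ + ((n : ℝ) + 1)) := by ring_nf
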